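/- Let n, m₁ be natural numbers with n - m₁ ≥ 2, let k, i ≥ 1, and let σ₁, ..., σ_{n-m₁} be real numbers with |σ_j - (k+1)^{-1}| < (k+1)^{-2}/4 for each j. Define λ₁ = ∏_{j=1}^{n-m₁} (i+1-σ_j)/(i+1-(k+2)^{-1}). Then there is a constant C depending only on n and m₁ with 1 - λ₁ ≤ C k^{-2} i^{-1}. -/

import Mathlib

lemma aux_one_sub_prod {ι : Type*} (s : Finset ι) (f : ι → ℝ)
    (h0 : ∀ j ∈ s, 0 ≤ f j) (h1 : ∀ j ∈ s, f j ≤ 1) :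
    1 - ∏ j ∈ s, f j ≤ ∑ j ∈ s, (1 - f j) := by
  classical
  induction s using Finset.induction with
  | empty => simp
  | @insert a s hx ih =>
    rw [Finset.prod_insert hx, Finset.sum_insert hx]
    have h0a := h0 a (Finset.mem_insert_self a s)
    have h1a := h1 a (Finset.mem_insert_self a s)
    have h0' : ∀ j ∈ s, 0 ≤ f j := fun j hj => h0 j (Finset.mem_insert_of_mem hj)
    have h1' : ∀ j ∈ s, f j ≤ 1 := fun j hj => h1 j (Finset.mem_insert_of_mem hj)
    have hp0 : 0 ≤ ∏ j ∈ s, f j := Finset.prod_nonneg h0'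
    have hp1 : ∏ j ∈ s, f j ≤ 1 := Finset.prod_le_one h0' h1'
    have := ih h0' h1'
    nlinarith

theorem stmt_11 (n m₁ : ℕ) (h : m₁ + 2 ≤ n) :
    ∃ C > 0, ∀ k i : ℕ, 1 ≤ k → 1 ≤ i →
      ∀ σ : Fin (n - m₁) → ℝ,
        (∀ j, |σ j - ((k : ℝ) + 1)⁻¹| < (((k : ℝ) + 1) ^ 2)⁻¹ / 4) →
        1 - ∏ j, (((i : ℝ) + 1 - σ j) / ((i : ℝ) + 1 - ((k : ℝ) + 2)⁻¹))
          ≤ C * ((k : ℝ) ^ 2)⁻¹ * (i : ℝ)⁻¹ := by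
  have hN : (0:ℝ) < ((n - m₁ : ℕ) : ℝ) := by
    exact_mod_cast (by omega : 0 < n - m₁)
  refine ⟨2 * ((n - m₁ : ℕ) : ℝ), by linarith, ?_⟩
  intro k i hk hi σ hσ
  have hk1 : (1:ℝ) ≤ (k:ℝ) := by exact_mod_cast hk
  have hi1 : (1:ℝ) ≤ (i:ℝ) := by exact_mod_cast hi
  set f : Fin (n - m₁) → ℝ :=
    fun j => ((i : ℝ) + 1 - σ j) / ((i : ℝ) + 1 - ((k : ℝ) + 2)⁻¹) with hf
  have hden : (0:ℝ) < (i : ℝ) + 1 - ((k : ℝ) + 2)⁻¹ := by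
    have : ((k:ℝ) + 2)⁻¹ ≤ 1 := by
      rw [inv_le_one_iff₀]; right; linarith
    linarith
  have hσub : ∀ j, σ j < ((k:ℝ)+1)⁻¹ + (((k:ℝ)+1)^2)⁻¹/4 := by
    intro j; have := abs_lt.1 (hσ j); linarith [this.2]
  have hσlb : ∀ j, ((k:ℝ)+2)⁻¹ < σ j := by
    intro j
    have h2 := (abs_lt.1 (hσ j)).1
    have hgap : ((k:ℝ)+2)⁻¹ + (((k:ℝ)+1)^2)⁻¹/4 ≤ ((k:ℝ)+1)⁻¹ := by
      have ha : ((k:ℝ)+1) * ((k:ℝ)+1)⁻¹ = 1 := mul_inv_cancel₀ (by linarith)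
      have hb : ((k:ℝ)+2) * ((k:ℝ)+2)⁻¹ = 1 := mul_inv_cancel₀ (by linarith)
      have hc : (((k:ℝ)+1)^2) * (((k:ℝ)+1)^2)⁻¹ = 1 := mul_inv_cancel₀ (by positivity)
      have hpa : (0:ℝ) < ((k:ℝ)+1)⁻¹ := by positivity
      have hpb : (0:ℝ) < ((k:ℝ)+2)⁻¹ := by positivity
      have hpc : (0:ℝ) < (((k:ℝ)+1)^2)⁻¹ := by positivity
      nlinarith [sq_nonneg ((k:ℝ)+1), sq_nonneg ((k:ℝ))]
    linarith
  have hk0 : (0:ℝ) < (k:ℝ) := by linarith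
  have hi0 : (0:ℝ) < (i:ℝ) := by linarith
  -- per-factor bounds
  have hσ1 : ∀ j, σ j < 1 := by
    intro j
    have h1 : ((k:ℝ)+1)⁻¹ ≤ 2⁻¹ := by
      apply inv_anti₀ <;> linarith
    have h2 : (((k:ℝ)+1)^2)⁻¹ ≤ 1 := by
      rw [inv_le_one_iff₀]; right; nlinarith
    have := hσub j
    linarith
  have hf0 : ∀ j, 0 ≤ f j := by
    intro j
    apply div_nonneg _ hden.le
    have := hσ1 j; linarith
  have hf1 : ∀ j, f j ≤ 1 := by
    intro j
    rw [hf, div_le_one hden]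
    have := hσlb j; linarith
  have hnum : ∀ j, σ j - ((k:ℝ)+2)⁻¹ ≤ 2 * ((k:ℝ)^2)⁻¹ := by
    intro j
    have hab : ((k:ℝ)+1)⁻¹ - ((k:ℝ)+2)⁻¹ = (((k:ℝ)+1)*((k:ℝ)+2))⁻¹ := by
      rw [mul_inv]
      field_simp
      ring
    have h1 : (((k:ℝ)+1)*((k:ℝ)+2))⁻¹ ≤ ((k:ℝ)^2)⁻¹ := by
      apply inv_anti₀ (by positivity)
      nlinarith
    have h2 : (((k:ℝ)+1)^2)⁻¹ ≤ ((k:ℝ)^2)⁻¹ := by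
      apply inv_anti₀ (by positivity)
      nlinarith
    have := hσub j
    have hd : (0:ℝ) ≤ ((k:ℝ)^2)⁻¹ := by positivity
    linarith
  have hfac : ∀ j, 1 - f j ≤ 2 * ((k:ℝ)^2)⁻¹ * (i:ℝ)⁻¹ := by
    intro j
    have heq : 1 - f j = (σ j - ((k:ℝ)+2)⁻¹) / ((i : ℝ) + 1 - ((k : ℝ) + 2)⁻¹) := by
      rw [hf]
      rw [eq_div_iff hden.ne']
      field_simp
      have hD : ((i:ℝ)+1)*((k:ℝ)+2) - 1 ≠ 0 := by nlinarith
      rw [show (((i:ℝ)+1)*((k:ℝ)+2)-1)*(1 - ((i:ℝ)+1-σ j)*((k:ℝ)+2)/(((i:ℝ)+1)*((k:ℝ)+2)-1)) = (((i:ℝ)+1)*((k:ℝ)+2)-1) - ((i:ℝ)+1-σ j)*((k:ℝ)+2)/(((i:ℝ)+1)*((k:ℝ)+2)-1) * (((i:ℝ)+1)*((k:ℝ)+2)-1) by ring, div_mul_cancel₀ _ hD]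
      ring
    rw [heq]
    have hdge : (i:ℝ) ≤ (i : ℝ) + 1 - ((k : ℝ) + 2)⁻¹ := by
      have : ((k:ℝ) + 2)⁻¹ ≤ 1 := by rw [inv_le_one_iff₀]; right; linarith
      linarith
    calc (σ j - ((k:ℝ)+2)⁻¹) / ((i : ℝ) + 1 - ((k : ℝ) + 2)⁻¹)
        ≤ (2 * ((k:ℝ)^2)⁻¹) / (i:ℝ) := by
          apply div_le_div₀ (by positivity) (hnum j) hi0 hdge
      _ = 2 * ((k:ℝ)^2)⁻¹ * (i:ℝ)⁻¹ := by rw [div_eq_mul_inv]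
  calc 1 - ∏ j, f j ≤ ∑ j, (1 - f j) :=
        aux_one_sub_prod Finset.univ f (fun j _ => hf0 j) (fun j _ => hf1 j)
    _ ≤ ∑ _j : Fin (n - m₁), 2 * ((k:ℝ)^2)⁻¹ * (i:ℝ)⁻¹ :=
        Finset.sum_le_sum (fun j _ => hfac j)
    _ = ((n - m₁ : ℕ) : ℝ) * (2 * ((k:ℝ)^2)⁻¹ * (i:ℝ)⁻¹) := by
        rw [Finset.sum_const, Finset.card_univ, Fintype.card_fin, nsmul_eq_mul]
    _ = 2 * ((n - m₁ : ℕ) : ℝ) * ((k:ℝ)^2)⁻¹ * (i:ℝ)⁻¹ := by ring
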